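/- Let ρ_AB be a density matrix on A⊗B with A, B finite-dimensional. Then H_min(A|B) ≤ −2 log₂(Tr_B √(Tr_A ρ_AB²)). -/

import Mathlib

open Matrix Kronecker ComplexOrder

/-- Partial trace over the first factor of a bipartite matrix on `A ⊗ B`. -/
noncomputable def ptrA {a b : Type*} [Fintype a]
    (ρ : Matrix (a × b) (a × b) ℂ) : Matrix b b ℂ :=
  Matrix.of fun j j' => ∑ i : a, ρ (i, j) (i, j')

/-- The conditional min-entropy `H_min(A|B)_ρ
  = -log₂ inf { Tr υ : υ ≥ 0, ρ_AB ≤ 1_A ⊗ υ }`. -/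
noncomputable def condMinEntropy {a b : Type*} [Fintype a] [Fintype b]
    [DecidableEq a] [DecidableEq b]
    (ρ : Matrix (a × b) (a × b) ℂ) : ℝ :=
  -Real.logb 2 (sInf {t : ℝ | ∃ υ : Matrix b b ℂ, υ.PosSemidef ∧
    (((1 : Matrix a a ℂ) ⊗ₖ υ) - ρ).PosSemidef ∧ t = υ.trace.re})


section PsdSqrtCompat

open scoped MatrixOrder

noncomputable def Matrix.PosSemidef.sqrt {n : Type*} [Fintype n] [DecidableEq n]
    {A : Matrix n n ℂ} (_hA : A.PosSemidef) : Matrix n n ℂ :=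
  CFC.sqrt A

lemma Matrix.PosSemidef.posSemidef_sqrt {n : Type*} [Fintype n] [DecidableEq n]
    {A : Matrix n n ℂ} (hA : A.PosSemidef) : hA.sqrt.PosSemidef :=
  (CFC.sqrt_nonneg A).posSemidef

lemma Matrix.PosSemidef.sqrt_mul_self {n : Type*} [Fintype n] [DecidableEq n]
    {A : Matrix n n ℂ} (hA : A.PosSemidef) : hA.sqrt * hA.sqrt = A :=
  CFC.sqrt_mul_sqrt_self A hA.nonneg

end PsdSqrtCompat

section CondMinEntropyAux

set_option linter.unusedSectionVars false
set_option maxHeartbeats 1000000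

variable {a b : Type*} [Fintype a] [Fintype b] [DecidableEq a] [DecidableEq b]

lemma trace_ptrA (M : Matrix (a × b) (a × b) ℂ) : (ptrA M).trace = M.trace := by
  simp only [Matrix.trace, ptrA, Matrix.diag, Matrix.of_apply, Fintype.sum_prod_type]
  exact Finset.sum_comm

lemma trace_one_kron_mul (X : Matrix b b ℂ) (M : Matrix (a × b) (a × b) ℂ) :
    (((1 : Matrix a a ℂ) ⊗ₖ X) * M).trace = (X * ptrA M).trace := by
  simp only [Matrix.trace, Matrix.diag, Matrix.mul_apply, ptrA, Matrix.of_apply,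
    Fintype.sum_prod_type, kroneckerMap_apply, Matrix.one_apply, ite_mul, one_mul, zero_mul,
    Finset.sum_ite_irrel, Finset.sum_const_zero, Finset.sum_ite_eq, Finset.mem_univ, if_true,
    Finset.mul_sum]
  rw [Finset.sum_comm]
  refine Finset.sum_congr rfl fun j _ => ?_
  rw [Finset.sum_comm]

lemma psd_diag_nonneg {M : Matrix b b ℂ} (h : M.PosSemidef) (i : b) : 0 ≤ M i i := by
  have := h.dotProduct_mulVec_nonneg (Pi.single i 1)
  simpa [dotProduct, Matrix.mulVec, Pi.single_apply, Finset.sum_ite_eq, Finset.mul_sum] using this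

lemma psd_trace_nonneg {M : Matrix b b ℂ} (h : M.PosSemidef) : 0 ≤ M.trace :=
  Finset.sum_nonneg fun i _ => psd_diag_nonneg h i

lemma psd_trace_eq {M : Matrix b b ℂ} (h : M.PosSemidef) : M.trace = (M.trace.re : ℂ) := by
  obtain ⟨_, him⟩ := Complex.nonneg_iff.mp (psd_trace_nonneg h)
  exact Complex.ext rfl him.symm

lemma psd_trace_re_nonneg {M : Matrix b b ℂ} (h : M.PosSemidef) : 0 ≤ M.trace.re :=
  (Complex.nonneg_iff.mp (psd_trace_nonneg h)).1

lemma trace_conjTranspose_mul_self_re (X : Matrix b b ℂ) :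
    (Xᴴ * X).trace.re = ∑ p : b × b, ‖X p.1 p.2‖ ^ 2 := by
  have : (Xᴴ * X).trace = ∑ p : b × b, ((‖X p.1 p.2‖ ^ 2 : ℝ) : ℂ) := by
    simp only [Matrix.trace, Matrix.diag, Matrix.mul_apply, Matrix.conjTranspose_apply,
      Fintype.sum_prod_type]
    rw [Finset.sum_comm]
    refine Finset.sum_congr rfl fun i _ => Finset.sum_congr rfl fun j _ => ?_
    rw [RCLike.star_def, RCLike.conj_mul]
    norm_cast
  rw [this, Complex.re_sum]
  norm_num [← Complex.ofReal_pow]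

lemma trace_conjTranspose_mul_eq_sum (X Y : Matrix b b ℂ) :
    (Xᴴ * Y).trace = ∑ p : b × b, star (X p.1 p.2) * Y p.1 p.2 := by
  simp only [Matrix.trace, Matrix.diag, Matrix.mul_apply, Matrix.conjTranspose_apply,
    Fintype.sum_prod_type]
  exact Finset.sum_comm

lemma trace_cauchy_schwarz (X Y : Matrix b b ℂ) :
    ‖(Xᴴ * Y).trace‖ ^ 2 ≤ (Xᴴ * X).trace.re * (Yᴴ * Y).trace.re := by
  rw [trace_conjTranspose_mul_eq_sum, trace_conjTranspose_mul_self_re,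
    trace_conjTranspose_mul_self_re]
  have h1 : ‖∑ p : b × b, star (X p.1 p.2) * Y p.1 p.2‖ ≤
      ∑ p : b × b, ‖X p.1 p.2‖ * ‖Y p.1 p.2‖ := by
    refine (norm_sum_le _ _).trans (Finset.sum_le_sum fun p _ => ?_)
    rw [norm_mul, norm_star]
  calc ‖∑ p : b × b, star (X p.1 p.2) * Y p.1 p.2‖ ^ 2
      ≤ (∑ p : b × b, ‖X p.1 p.2‖ * ‖Y p.1 p.2‖) ^ 2 := by
        exact pow_le_pow_left₀ (norm_nonneg _) h1 2
    _ ≤ (∑ p : b × b, ‖X p.1 p.2‖ ^ 2) * ∑ p : b × b, ‖Y p.1 p.2‖ ^ 2 :=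
        Finset.sum_mul_sq_le_sq_mul_sq _ _ _

lemma one_kron_conjTranspose (M : Matrix b b ℂ) :
    ((1 : Matrix a a ℂ) ⊗ₖ M)ᴴ = (1 : Matrix a a ℂ) ⊗ₖ Mᴴ := by
  ext ⟨i, j⟩ ⟨k, l⟩
  simp [Matrix.conjTranspose_apply, Matrix.one_apply, kroneckerMap_apply, eq_comm]
  split <;> simp

lemma trace_mul_psd_nonneg {A B : Matrix b b ℂ} (hA : A.PosSemidef) (hB : B.PosSemidef) :
    0 ≤ (A * B).trace.re := by
  obtain ⟨W, hWh, rfl⟩ : ∃ W : Matrix b b ℂ, W.IsHermitian ∧ W * W = A :=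
    ⟨hA.sqrt, hA.posSemidef_sqrt.isHermitian, hA.sqrt_mul_self⟩
  have h1 : (W * W * B).trace = (Wᴴ * B * W).trace := by
    rw [Matrix.mul_assoc, Matrix.trace_mul_comm, hWh.eq]
  rw [h1]
  exact psd_trace_re_nonneg (hB.conjTranspose_mul_mul_same _)

lemma psd_sub_sq {σ : Matrix b b ℂ} (hσ : σ.PosSemidef) (h1 : (1 - σ).PosSemidef) :
    (σ - σ * σ).PosSemidef := by
  obtain ⟨W, hWh, rfl⟩ : ∃ W : Matrix b b ℂ, W.IsHermitian ∧ W * W = σ :=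
    ⟨hσ.sqrt, hσ.posSemidef_sqrt.isHermitian, hσ.sqrt_mul_self⟩
  have h2 := h1.conjTranspose_mul_mul_same (B := W)
  rw [hWh.eq] at h2
  convert h2 using 1
  noncomm_ring

lemma smul_one_posDef {n : Type*} [Fintype n] [DecidableEq n] {δ : ℝ} (hδ : 0 < δ) :
    ((δ : ℂ) • (1 : Matrix n n ℂ)).PosDef := by
  rw [Matrix.smul_one_eq_diagonal]
  exact Matrix.posDef_diagonal_iff.mpr fun i => Complex.zero_lt_real.mpr hδ

lemma key_ineq {ρ : Matrix (a × b) (a × b) ℂ} (hρ : ρ.PosSemidef) (htr : ρ.trace = 1)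
    {T : Matrix b b ℂ} (hT : T.PosSemidef) (hTsq : T * T = ptrA (ρ * ρ))
    {υ : Matrix b b ℂ} (hυ : υ.PosSemidef)
    (hfeas : (((1 : Matrix a a ℂ) ⊗ₖ υ) - ρ).PosSemidef) :
    T.trace.re ^ 2 ≤ υ.trace.re := by
  refine le_of_forall_pos_le_add fun ε hε => ?_
  set δ : ℝ := ε / (Fintype.card b + 1) with hδdef
  have hδ : 0 < δ := by positivity
  set υ' : Matrix b b ℂ := υ + (δ : ℂ) • 1 with hυ'def
  have hυ'pd : υ'.PosDef := Matrix.PosDef.posSemidef_add hυ (smul_one_posDef hδ)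
  -- feasibility for υ'
  have hfeas' : (((1 : Matrix a a ℂ) ⊗ₖ υ') - ρ).PosSemidef := by
    have h1 : ((1 : Matrix a a ℂ) ⊗ₖ υ') - ρ
        = (((1 : Matrix a a ℂ) ⊗ₖ υ) - ρ) + (δ : ℂ) • (1 : Matrix (a × b) (a × b) ℂ) := by
      rw [hυ'def, kronecker_add, kronecker_smul, one_kronecker_one]
      abel
    rw [h1]
    exact hfeas.add (smul_one_posDef hδ).posSemidef
  -- the square root S of υ'
  set S : Matrix b b ℂ := hυ'pd.posSemidef.sqrt with hSdef
  have hSpsd : S.PosSemidef := hυ'pd.posSemidef.posSemidef_sqrt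
  have hSh : S.IsHermitian := hSpsd.isHermitian
  have hSS : S * S = υ' := hυ'pd.posSemidef.sqrt_mul_self
  have hdet : IsUnit S.det := by
    have h1 : S.det * S.det = υ'.det := by rw [← Matrix.det_mul, hSS]
    have h2 : υ'.det ≠ 0 := hυ'pd.det_pos.ne'
    exact isUnit_iff_ne_zero.mpr (fun h => h2 (by rw [← h1, h, mul_zero]))
  have hinv1 : S * S⁻¹ = 1 := Matrix.mul_nonsing_inv _ hdet
  have hinv2 : S⁻¹ * S = 1 := Matrix.nonsing_inv_mul _ hdet
  have hSinvh : (S⁻¹).IsHermitian := by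
    rw [Matrix.IsHermitian, Matrix.conjTranspose_nonsing_inv, hSh.eq]
  -- K and U
  set K : Matrix (a × b) (a × b) ℂ := (1 : Matrix a a ℂ) ⊗ₖ S⁻¹ with hKdef
  set U : Matrix (a × b) (a × b) ℂ := (1 : Matrix a a ℂ) ⊗ₖ υ' with hUdef
  have hKh : Kᴴ = K := by rw [hKdef, one_kron_conjTranspose, hSinvh.eq]
  have hKK : K * K = (1 : Matrix a a ℂ) ⊗ₖ (S⁻¹ * S⁻¹) := by
    rw [hKdef, ← mul_kronecker_mul, Matrix.one_mul]
  have hmid : S⁻¹ * υ' * S⁻¹ = 1 := by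
    rw [← hSS, ← Matrix.mul_assoc, hinv2, Matrix.one_mul, hinv1]
  have hKUK : K * U * K = 1 := by
    rw [hKdef, hUdef, ← mul_kronecker_mul, ← mul_kronecker_mul, Matrix.one_mul, Matrix.one_mul,
      hmid, one_kronecker_one]
  have hKUK' : ∀ X : Matrix (a × b) (a × b) ℂ, K * (U * (K * X)) = X := fun X => by
    rw [← Matrix.mul_assoc, ← Matrix.mul_assoc, hKUK, Matrix.one_mul]
  have hUpsd : U.PosSemidef := by
    have h1 : U = ((1 : Matrix a a ℂ) ⊗ₖ S)ᴴ * ((1 : Matrix a a ℂ) ⊗ₖ S) := by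
      rw [one_kron_conjTranspose, hSh.eq, ← mul_kronecker_mul, Matrix.one_mul, hSS, hUdef]
    rw [h1]
    exact Matrix.posSemidef_conjTranspose_mul_self _
  -- σ
  set σ : Matrix (a × b) (a × b) ℂ := K * ρ * K with hσdef
  have hσpsd : σ.PosSemidef := by
    have := hρ.conjTranspose_mul_mul_same (B := K)
    rwa [hKh] at this
  have h1σ : ((1 : Matrix (a × b) (a × b) ℂ) - σ).PosSemidef := by
    have h2 := hfeas'.conjTranspose_mul_mul_same (B := K)
    rw [hKh] at h2
    have h3 : K * (((1 : Matrix a a ℂ) ⊗ₖ υ') - ρ) * K = 1 - σ := by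
      rw [Matrix.mul_sub, Matrix.sub_mul, ← hUdef, hKUK, hσdef]
    rwa [h3] at h2
  -- Cauchy–Schwarz with X = S, Y = S⁻¹ T
  have hcs := trace_cauchy_schwarz S (S⁻¹ * T)
  have hXY : Sᴴ * (S⁻¹ * T) = T := by
    rw [hSh.eq, ← Matrix.mul_assoc, hinv1, Matrix.one_mul]
  have hXX : Sᴴ * S = υ' := by rw [hSh.eq, hSS]
  have hYY : ((S⁻¹ * T)ᴴ * (S⁻¹ * T)).trace = (U * (σ * σ)).trace := by
    have e0 : (S⁻¹ * T)ᴴ * (S⁻¹ * T) = T * ((S⁻¹ * S⁻¹) * T) := by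
      rw [Matrix.conjTranspose_mul, hSinvh.eq, hT.isHermitian.eq]
      simp only [Matrix.mul_assoc]
    have e1 : (T * ((S⁻¹ * S⁻¹) * T)).trace = ((S⁻¹ * S⁻¹) * (T * T)).trace := by
      rw [Matrix.trace_mul_comm, Matrix.mul_assoc]
    have e2 : ((S⁻¹ * S⁻¹) * (T * T)).trace = ((K * K) * (ρ * ρ)).trace := by
      rw [hTsq, ← trace_one_kron_mul, hKK]
    have e3 : ((K * K) * (ρ * ρ)).trace = (σ * (U * σ)).trace := by
      have h4 : σ * (U * σ) = (K * (ρ * ρ)) * K := by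
        simp only [hσdef, Matrix.mul_assoc, hKUK']
      rw [h4]
      conv_rhs => rw [Matrix.trace_mul_comm]
      simp only [Matrix.mul_assoc]
    have e4 : (σ * (U * σ)).trace = (U * (σ * σ)).trace := by
      have h : (U * σ) * σ = U * (σ * σ) := by simp only [Matrix.mul_assoc]
      rw [← h, ← Matrix.trace_mul_comm]
    rw [e0, e1, e2, e3, e4]
  rw [hXY, hXX, hYY] at hcs
  -- bound the second factor by 1
  have hσ2 : (σ - σ * σ).PosSemidef := psd_sub_sq hσpsd h1σ
  have h6 : 0 ≤ (U * (σ - σ * σ)).trace.re := trace_mul_psd_nonneg hUpsd hσ2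
  have h7 : (U * σ).trace = 1 := by
    have h : U * σ = (U * (K * ρ)) * K := by simp only [hσdef, Matrix.mul_assoc]
    rw [h, Matrix.trace_mul_comm, hKUK', htr]
  have h8 : (U * σ).trace - (U * (σ * σ)).trace = (U * (σ - σ * σ)).trace := by
    rw [Matrix.mul_sub, Matrix.trace_sub]
  have h9 : (U * (σ * σ)).trace.re ≤ 1 := by
    rw [← h8] at h6
    rw [Complex.sub_re, h7, Complex.one_re] at h6
    linarith
  -- assemble
  have hTnorm : ‖T.trace‖ ^ 2 = T.trace.re ^ 2 := by
    rw [psd_trace_eq hT, Complex.norm_real, Real.norm_eq_abs, sq_abs, Complex.ofReal_re]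
  have hυ'nonneg : 0 ≤ υ'.trace.re := psd_trace_re_nonneg hυ'pd.posSemidef
  have hfin : T.trace.re ^ 2 ≤ υ'.trace.re := by
    calc T.trace.re ^ 2 = ‖T.trace‖ ^ 2 := hTnorm.symm
      _ ≤ υ'.trace.re * (U * (σ * σ)).trace.re := hcs
      _ ≤ υ'.trace.re * 1 := mul_le_mul_of_nonneg_left h9 hυ'nonneg
      _ = υ'.trace.re := mul_one _
  have hυ'tr : υ'.trace.re = υ.trace.re + δ * Fintype.card b := by
    have h : υ'.trace = υ.trace + (δ : ℂ) * (Fintype.card b : ℂ) := by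
      rw [hυ'def, Matrix.trace_add, Matrix.trace_smul, Matrix.trace_one, smul_eq_mul]
    rw [h, Complex.add_re, Complex.mul_re]
    simp
  have hlast : δ * Fintype.card b ≤ ε := by
    rw [hδdef, div_mul_eq_mul_div, div_le_iff₀ (by positivity)]
    nlinarith [hε.le, (Nat.cast_nonneg (Fintype.card b) : (0:ℝ) ≤ _)]
  linarith

lemma feasible_nonempty {ρ : Matrix (a × b) (a × b) ℂ} (hρ : ρ.PosSemidef) :
    ∃ υ : Matrix b b ℂ, υ.PosSemidef ∧ (((1 : Matrix a a ℂ) ⊗ₖ υ) - ρ).PosSemidef := by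
  set c : ℝ := ∑ p : a × b, ∑ q : a × b, ‖ρ p q‖ with hcdef
  have hc : 0 ≤ c := Finset.sum_nonneg fun p _ =>
    Finset.sum_nonneg fun q _ => norm_nonneg _
  refine ⟨(c : ℂ) • 1, ?_, ?_⟩
  · rw [Matrix.smul_one_eq_diagonal]
    exact Matrix.posSemidef_diagonal_iff.mpr fun i => Complex.zero_le_real.mpr hc
  · have hkron : (1 : Matrix a a ℂ) ⊗ₖ ((c : ℂ) • 1) =
        (c : ℂ) • (1 : Matrix (a × b) (a × b) ℂ) := by
      rw [kronecker_smul, one_kronecker_one]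
    rw [hkron]
    refine Matrix.PosSemidef.of_dotProduct_mulVec_nonneg ?_ ?_
    · show _ᴴ = _
      rw [Matrix.conjTranspose_sub, Matrix.conjTranspose_smul, Matrix.conjTranspose_one,
        hρ.isHermitian.eq, Complex.star_def, Complex.conj_ofReal]
    · intro x
      set n : ℝ := ∑ i : a × b, ‖x i‖ ^ 2 with hndef
      have hn : 0 ≤ n := Finset.sum_nonneg fun i _ => sq_nonneg _
      have hsq_le : ∀ i : a × b, ‖x i‖ ^ 2 ≤ n := fun i =>
        Finset.single_le_sum (fun j _ => sq_nonneg (‖x j‖)) (Finset.mem_univ i)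
      have hxx : star x ⬝ᵥ x = (n : ℂ) := by
        simp only [dotProduct, Pi.star_apply, hndef]
        push_cast
        refine Finset.sum_congr rfl fun i _ => ?_
        rw [RCLike.star_def, RCLike.conj_mul]
        norm_cast
      set z : ℂ := star x ⬝ᵥ ρ *ᵥ x with hzdef
      have hz : 0 ≤ z := hρ.dotProduct_mulVec_nonneg x
      have hzim : z.im = 0 := (Complex.nonneg_iff.mp hz).2.symm
      have hxpq : ∀ p q : a × b, ‖x p‖ * ‖x q‖ ≤ n := fun p q => by
        nlinarith [hsq_le p, hsq_le q, norm_nonneg (x p), norm_nonneg (x q),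
          sq_nonneg (‖x p‖ - ‖x q‖)]
      have hzbound : z.re ≤ c * n := by
        have h0 : z.re ≤ ‖z‖ := by exact Complex.re_le_norm z
        refine h0.trans ?_
        have h1 : ‖z‖ ≤ ∑ p : a × b, ∑ q : a × b, ‖ρ p q‖ * n := by
          rw [hzdef]
          simp only [dotProduct, Matrix.mulVec, Pi.star_apply, Finset.mul_sum]
          refine (norm_sum_le _ _).trans (Finset.sum_le_sum fun p _ => ?_)
          refine (norm_sum_le _ _).trans (Finset.sum_le_sum fun q _ => ?_)
          rw [norm_mul, norm_mul, norm_star]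
          calc ‖x p‖ * (‖ρ p q‖ * ‖x q‖) = ‖ρ p q‖ * (‖x p‖ * ‖x q‖) := by ring
            _ ≤ ‖ρ p q‖ * n := mul_le_mul_of_nonneg_left (hxpq p q) (norm_nonneg _)
        refine h1.trans_eq ?_
        rw [hcdef, Finset.sum_mul]
        exact Finset.sum_congr rfl fun p _ => (Finset.sum_mul _ _ _).symm
      have hval : star x ⬝ᵥ (((c : ℂ) • 1 - ρ) *ᵥ x) = (c : ℂ) * (n : ℂ) - z := by
        rw [Matrix.sub_mulVec, dotProduct_sub, Matrix.smul_mulVec, Matrix.one_mulVec,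
          dotProduct_smul, smul_eq_mul, hxx, hzdef]
      rw [hval]
      rw [Complex.nonneg_iff]
      have hcn : ((c : ℂ) * (n : ℂ)).re = c * n := by
        rw [← Complex.ofReal_mul, Complex.ofReal_re]
      have hcn' : ((c : ℂ) * (n : ℂ)).im = 0 := by
        rw [← Complex.ofReal_mul, Complex.ofReal_im]
      constructor
      · rw [Complex.sub_re, hcn]; linarith
      · rw [Complex.sub_im, hcn', hzim, sub_zero]


end CondMinEntropyAux

set_option maxHeartbeats 1000000 in
/-- Upper bound on the conditional min-entropy (the `s = 0` case):
`H_min(A|B) ≤ -2 log₂ (Tr_B √(Tr_A ρ_AB²))`, where the square root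
`√(Tr_A ρ_AB²)` is characterized as the positive semidefinite `T` with
`T * T = Tr_A ρ_AB²`. -/
theorem condMinEntropy_upper_bound
    {a b : Type*} [Fintype a] [Fintype b] [DecidableEq a] [DecidableEq b]
    (ρ : Matrix (a × b) (a × b) ℂ) (hρ : ρ.PosSemidef) (htr : ρ.trace = 1)
    (T : Matrix b b ℂ) (hT : T.PosSemidef) (hTsq : T * T = ptrA (ρ * ρ)) :
    condMinEntropy ρ ≤ -(2 * Real.logb 2 (T.trace.re)) := by

  have hTpos : 0 < T.trace.re := by
    rcases (psd_trace_re_nonneg hT).lt_or_eq with h | h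
    · exact h
    · exfalso
      have hW : ∑ p : b × b, ‖hT.sqrt p.1 p.2‖ ^ 2 = 0 := by
        have e : hT.sqrtᴴ * hT.sqrt = T := by
          rw [hT.posSemidef_sqrt.isHermitian.eq, hT.sqrt_mul_self]
        rw [← trace_conjTranspose_mul_self_re, e, ← h]
      have hW0 : hT.sqrt = 0 := by
        ext p q
        have h1 := (Finset.sum_eq_zero_iff_of_nonneg
          (fun i _ => sq_nonneg ‖hT.sqrt i.1 i.2‖)).mp hW ⟨p, q⟩ (Finset.mem_univ _)
        simpa using pow_eq_zero_iff (n := 2) (by norm_num) |>.mp h1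
      have hT0 : T = 0 := by rw [← hT.sqrt_mul_self, hW0, Matrix.mul_zero]
      have h2 : (ρᴴ * ρ).trace.re = 0 := by
        rw [hρ.isHermitian.eq]
        have e2 : (ρ * ρ).trace = (ptrA (ρ * ρ)).trace := (trace_ptrA _).symm
        rw [e2, ← hTsq, hT0, Matrix.mul_zero, Matrix.trace_zero, Complex.zero_re]
      rw [trace_conjTranspose_mul_self_re] at h2
      have hρ0 : ρ = 0 := by
        ext p q
        have h1 := (Finset.sum_eq_zero_iff_of_nonneg
          (fun i _ => sq_nonneg ‖ρ i.1 i.2‖)).mp h2 ⟨p, q⟩ (Finset.mem_univ _)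
        simpa using pow_eq_zero_iff (n := 2) (by norm_num) |>.mp h1
      rw [hρ0, Matrix.trace_zero] at htr
      exact zero_ne_one htr
  have hne : {t : ℝ | ∃ υ : Matrix b b ℂ, υ.PosSemidef ∧
      (((1 : Matrix a a ℂ) ⊗ₖ υ) - ρ).PosSemidef ∧ t = υ.trace.re}.Nonempty := by
    obtain ⟨υ, h1, h2⟩ := feasible_nonempty hρ
    exact ⟨υ.trace.re, υ, h1, h2, rfl⟩
  have hlb : ∀ t ∈ {t : ℝ | ∃ υ : Matrix b b ℂ, υ.PosSemidef ∧
      (((1 : Matrix a a ℂ) ⊗ₖ υ) - ρ).PosSemidef ∧ t = υ.trace.re},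
      T.trace.re ^ 2 ≤ t := by
    rintro t ⟨υ, h1, h2, rfl⟩
    exact key_ineq hρ htr hT hTsq h1 h2
  have hInf := le_csInf hne hlb
  unfold condMinEntropy
  apply neg_le_neg
  have heq : 2 * Real.logb 2 T.trace.re = Real.logb 2 (T.trace.re ^ 2) := by
    rw [Real.logb_pow]; norm_num
  rw [heq]
  exact Real.logb_le_logb_of_le one_lt_two (by positivity) hInf
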